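/- arXiv:0911.0867 — 2 statements merged into one kernel-verified Lean document; each statement's English description precedes it below -/
import Mathlib

section
/- For every integer n ≥ 1, the map Φ sending a matrix M ∈ G_ℂ to Φ(M) = (1/√(M₁₁)) · M (where M₁₁ > 0 is the (1,1)-entry of M) is an injective group homomorphism from G_ℂ into the Lorentz group O(2n+1,1) = {Q ∈ GL(2n+2,ℝ) : Q 𝕀 Qᵀ = 𝕀}, whose image is the set of matrices with first row (√u, x, −|x|²/(2√u)), middle block rows (0, B, −B xᵀ/√u), and last row (0, 0, 1/√u) with u > 0, x ∈ ℝ^{2n}, and B ∈ O(2n) commuting with J₀. -/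
open Matrix

/-- `ℝ^{2n} ≅ ℂⁿ` realized as `Fin n ⊕ Fin n` (real and imaginary parts). -/
abbrev TwoN (n : ℕ) := Fin n ⊕ Fin n

/-- Index set for `(2n+2) × (2n+2)` matrices: first row, `2n` middle rows, last row. -/
abbrev CIdx (n : ℕ) := Unit ⊕ TwoN n ⊕ Unit

/-- The standard complex structure `J₀` on `ℝ^{2n}`: the block matrix `[[0, -Iₙ], [Iₙ, 0]]`. -/
noncomputable def J0 (n : ℕ) : Matrix (TwoN n) (TwoN n) ℝ :=
  Matrix.fromBlocks 0 (-1) 1 0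

/-- The Lorentz form matrix `𝕀` with `1`'s at positions `(1, 2n+2)`, `(2n+2, 1)` and on the
middle diagonal, and `0` elsewhere. -/
noncomputable def iotaMat (n : ℕ) : Matrix (CIdx n) (CIdx n) ℝ :=
  Matrix.of fun i j =>
    match i, j with
    | Sum.inl _, Sum.inr (Sum.inr _) => 1
    | Sum.inr (Sum.inr _), Sum.inl _ => 1
    | Sum.inr (Sum.inl i), Sum.inr (Sum.inl j) => if i = j then 1 else 0
    | _, _ => 0

/-- The Lorentz group `O(2n+1, 1)` realized as `{Q : Q 𝕀 Qᵀ = 𝕀}`. -/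
noncomputable def LorentzSet (n : ℕ) : Set (Matrix (CIdx n) (CIdx n) ℝ) :=
  {Q | Q * iotaMat n * Qᵀ = iotaMat n}

/-- The matrix `Q(u, x, B)` with first row `(√u, x, -|x|²/(2√u))`, middle block rows
`(0, B, -B xᵀ/√u)` and last row `(0, 0, 1/√u)`. -/
noncomputable def simSqrtMat (n : ℕ) (u : ℝ) (x : TwoN n → ℝ)
    (B : Matrix (TwoN n) (TwoN n) ℝ) : Matrix (CIdx n) (CIdx n) ℝ :=
  Matrix.of fun i j =>
    match i, j with
    | Sum.inl _, Sum.inl _ => Real.sqrt u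
    | Sum.inl _, Sum.inr (Sum.inl j) => x j
    | Sum.inl _, Sum.inr (Sum.inr _) => -(∑ j, x j ^ 2) / (2 * Real.sqrt u)
    | Sum.inr (Sum.inl _), Sum.inl _ => 0
    | Sum.inr (Sum.inl i), Sum.inr (Sum.inl j) => B i j
    | Sum.inr (Sum.inl i), Sum.inr (Sum.inr _) => -(B.mulVec x i) / Real.sqrt u
    | Sum.inr (Sum.inr _), Sum.inl _ => 0
    | Sum.inr (Sum.inr _), Sum.inr (Sum.inl _) => 0
    | Sum.inr (Sum.inr _), Sum.inr (Sum.inr _) => 1 / Real.sqrt u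

/-- The matrix `M(u, x, B)` with first row `(u, √u·x, -|x|²/2)`, middle block rows
`(0, √u·B, -B xᵀ)` and last row `(0, 0, 1)`. -/
noncomputable def gcMat (n : ℕ) (u : ℝ) (x : TwoN n → ℝ) (B : Matrix (TwoN n) (TwoN n) ℝ) :
    Matrix (CIdx n) (CIdx n) ℝ :=
  Matrix.of fun i j =>
    match i, j with
    | Sum.inl _, Sum.inl _ => u
    | Sum.inl _, Sum.inr (Sum.inl j) => Real.sqrt u * x j
    | Sum.inl _, Sum.inr (Sum.inr _) => -(∑ j, x j ^ 2) / 2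
    | Sum.inr (Sum.inl _), Sum.inl _ => 0
    | Sum.inr (Sum.inl i), Sum.inr (Sum.inl j) => Real.sqrt u * B i j
    | Sum.inr (Sum.inl i), Sum.inr (Sum.inr _) => -(B.mulVec x i)
    | Sum.inr (Sum.inr _), Sum.inl _ => 0
    | Sum.inr (Sum.inr _), Sum.inr (Sum.inl _) => 0
    | Sum.inr (Sum.inr _), Sum.inr (Sum.inr _) => 1

/-- `G_ℂ`: the set of all matrices `M(u, x, B)` with `u > 0`, `x ∈ ℝ^{2n}`, and `B ∈ O(2n)`
commuting with `J₀`. -/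
noncomputable def GCSet (n : ℕ) : Set (Matrix (CIdx n) (CIdx n) ℝ) :=
  {M | ∃ (u : ℝ) (x : TwoN n → ℝ) (B : Matrix (TwoN n) (TwoN n) ℝ),
    0 < u ∧ B ∈ Matrix.orthogonalGroup (TwoN n) ℝ ∧ B * J0 n = J0 n * B ∧
    M = gcMat n u x B}

/-- The map `Φ(M) = (1/√(M₁₁)) • M`. -/
noncomputable def PhiMap (n : ℕ) (M : Matrix (CIdx n) (CIdx n) ℝ) :
    Matrix (CIdx n) (CIdx n) ℝ :=
  (1 / Real.sqrt (M (Sum.inl ()) (Sum.inl ()))) • M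



section Aux

variable {n : ℕ}

lemma gc_entry11 (u : ℝ) (x : TwoN n → ℝ) (B : Matrix (TwoN n) (TwoN n) ℝ) :
    gcMat n u x B (Sum.inl ()) (Sum.inl ()) = u := rfl

lemma phi_gc (u : ℝ) (hu : 0 < u) (x : TwoN n → ℝ) (B : Matrix (TwoN n) (TwoN n) ℝ) :
    PhiMap n (gcMat n u x B) = simSqrtMat n u x B := by
  have hs : Real.sqrt u ≠ 0 := ne_of_gt (Real.sqrt_pos.2 hu)
  have hsq : Real.sqrt u * Real.sqrt u = u := Real.mul_self_sqrt hu.le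
  rw [PhiMap, gc_entry11]
  ext i j
  obtain (i | i | i) := i <;> obtain (j | j | j) := j <;>
    simp only [Matrix.smul_apply, gcMat, simSqrtMat, Matrix.of_apply, smul_eq_mul,
      mul_zero, mul_one, one_mul]
  · field_simp; rw [Real.sq_sqrt hu.le]
  · rw [one_div, inv_mul_cancel_left₀ hs]
  · ring
  · rw [one_div, inv_mul_cancel_left₀ hs]
  · ring

lemma gc_eq_smul_phi (u : ℝ) (hu : 0 < u) (x : TwoN n → ℝ)
    (B : Matrix (TwoN n) (TwoN n) ℝ) :
    gcMat n u x B = Real.sqrt u • PhiMap n (gcMat n u x B) := by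
  have hs : Real.sqrt u ≠ 0 := ne_of_gt (Real.sqrt_pos.2 hu)
  rw [PhiMap, gc_entry11, smul_smul, mul_one_div, div_self hs, one_smul]

lemma simSqrt_mem_lorentz (u : ℝ) (hu : 0 < u) (x : TwoN n → ℝ)
    (B : Matrix (TwoN n) (TwoN n) ℝ) (hB : B ∈ Matrix.orthogonalGroup (TwoN n) ℝ) :
    simSqrtMat n u x B ∈ LorentzSet n := by
  have hs : Real.sqrt u ≠ 0 := ne_of_gt (Real.sqrt_pos.2 hu)
  have hsq : Real.sqrt u * Real.sqrt u = u := Real.mul_self_sqrt hu.le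
  have hBBt : B * Bᵀ = 1 := by
    have h := (Matrix.mem_orthogonalGroup_iff (TwoN n) ℝ).1 hB
    simpa using h
  have hB' : ∀ i j, (∑ m, B i m * B j m) = if i = j then (1:ℝ) else 0 := by
    intro i j
    have := congrFun (congrFun hBBt i) j
    simpa [Matrix.mul_apply, Matrix.one_apply] using this
  show _ = _
  ext i j
  obtain (i | i | i) := i <;> obtain (j | j | j) := j <;>
    simp only [Matrix.mul_apply, Matrix.transpose_apply, Fintype.sum_sum_type,
      simSqrtMat, iotaMat, Matrix.of_apply, Matrix.mulVec, dotProduct, pow_two,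
      Finset.univ_unique, Finset.sum_const, Finset.card_singleton, one_smul, smul_zero,
      mul_zero, zero_mul, mul_one, one_mul, add_zero, zero_add, mul_ite, ite_mul,
      Finset.sum_const_zero, Sum.inl.injEq, Sum.inr.injEq, reduceCtorEq, if_false,
      Finset.sum_ite_eq, Finset.sum_ite_eq', Finset.mem_univ, if_true, smul_eq_mul]
  all_goals first
    | (rw [← Fintype.sum_sum_type (fun m : TwoN n => B i m * B j m)]; exact hB' i j)
    | (try simp only [mul_comm, ← pow_two]
       field_simp
       try ring)

lemma mul_entry11 (u v : ℝ) (x y : TwoN n → ℝ) (B C : Matrix (TwoN n) (TwoN n) ℝ) :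
    (gcMat n u x B * gcMat n v y C) (Sum.inl ()) (Sum.inl ()) = u * v := by
  simp [Matrix.mul_apply, Fintype.sum_sum_type, gcMat]

end Aux

/-- `Φ : M ↦ (1/√(M₁₁)) • M` is an injective group homomorphism from `G_ℂ` into the Lorentz
group `O(2n+1,1) = {Q : Q 𝕀 Qᵀ = 𝕀}`, whose image is exactly the set of matrices
`Q(u, x, B)` with `u > 0`, `x ∈ ℝ^{2n}`, and `B ∈ O(2n)` commuting with `J₀`. -/
theorem PhiMap_injective_hom_into_lorentz (n : ℕ) (hn : 1 ≤ n) :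
    Set.InjOn (PhiMap n) (GCSet n) ∧
    (∀ M ∈ GCSet n, ∀ N ∈ GCSet n, PhiMap n (M * N) = PhiMap n M * PhiMap n N) ∧
    (∀ M ∈ GCSet n, PhiMap n M ∈ LorentzSet n) ∧
    PhiMap n '' GCSet n =
      {Q | ∃ (u : ℝ) (x : TwoN n → ℝ) (B : Matrix (TwoN n) (TwoN n) ℝ),
        0 < u ∧ B ∈ Matrix.orthogonalGroup (TwoN n) ℝ ∧ B * J0 n = J0 n * B ∧
        Q = simSqrtMat n u x B} := by
  refine ⟨?_, ?_, ?_, ?_⟩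
  · rintro M ⟨u, x, B, hu, hB, hJ, rfl⟩ N ⟨v, y, C, hv, hC, hJ', rfl⟩ h
    have h11 : Real.sqrt u = Real.sqrt v := by
      have := congrFun (congrFun h (Sum.inl ())) (Sum.inl ())
      rw [phi_gc u hu x B, phi_gc v hv y C] at this
      simpa [simSqrtMat] using this
    calc gcMat n u x B = Real.sqrt u • PhiMap n (gcMat n u x B) := gc_eq_smul_phi u hu x B
      _ = Real.sqrt v • PhiMap n (gcMat n v y C) := by rw [h11, h]
      _ = gcMat n v y C := (gc_eq_smul_phi v hv y C).symm
  · rintro M ⟨u, x, B, hu, hB, hJ, rfl⟩ N ⟨v, y, C, hv, hC, hJ', rfl⟩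
    have hs : Real.sqrt u ≠ 0 := ne_of_gt (Real.sqrt_pos.2 hu)
    have ht : Real.sqrt v ≠ 0 := ne_of_gt (Real.sqrt_pos.2 hv)
    rw [PhiMap, PhiMap, PhiMap, mul_entry11, gc_entry11, gc_entry11,
      Matrix.smul_mul, Matrix.mul_smul, smul_smul, Real.sqrt_mul hu.le,
      one_div_mul_one_div]
  · rintro M ⟨u, x, B, hu, hB, hJ, rfl⟩
    rw [phi_gc u hu x B]
    exact simSqrt_mem_lorentz u hu x B hB
  · ext Q
    constructor
    · rintro ⟨M, ⟨u, x, B, hu, hB, hJ, rfl⟩, rfl⟩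
      exact ⟨u, x, B, hu, hB, hJ, (phi_gc u hu x B)⟩
    · rintro ⟨u, x, B, hu, hB, hJ, rfl⟩
      exact ⟨gcMat n u x B, ⟨u, x, B, hu, hB, hJ, rfl⟩, (phi_gc u hu x B)⟩
end

section
/- Let n ≥ 1, 1 ≤ k ≤ n+1, and a₁, …, a_k ∈ ℝ. Suppose there exist indices i, j ≤ k with (a_i+1)² > 1 and (a_j+1)² < 1. Then there exist vectors v, v' ∈ ℂ^{n+2} \ {0} with ⟨v,v⟩ = 0 and ⟨v',v'⟩ = 0 such that, setting ξ_w = (i(a₁+1)w₁, …, i(a_k+1)w_k, i w_{k+1}, …, i w_{n+2}) for w = (w₁,…,w_{n+2}), one has ⟨ξ_v, ξ_v⟩ > 0 and ⟨ξ_{v'}, ξ_{v'}⟩ < 0; i.e., the induced vector field is neither everywhere causal nor everywhere spacelike on the null cone. -/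
open Complex

/-- The Hermitian form `⟨z,w⟩ = conj(z₁)w₁ + ⋯ + conj(z_{n+1})w_{n+1} − conj(z_{n+2})w_{n+2}`
of signature `(n+1, 1)` on `ℂ^{n+2}`. -/
noncomputable def hermForm (n : ℕ) (z w : Fin (n + 2) → ℂ) : ℂ :=
  ∑ j : Fin (n + 2), (if (j : ℕ) = n + 1 then (-1 : ℂ) else 1) * ((starRingEnd ℂ) (z j) * w j)

/-- The velocity vector `ξ_w = (i(a₁+1)w₁, …, i(a_k+1)w_k, i w_{k+1}, …, i w_{n+2})`
of the one-parameter group `ρ(t) = diag(e^{it(a₁+1)}, …, e^{it(a_k+1)}, e^{it}, …, e^{it})`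
at `w`. -/
noncomputable def xiShift (n k : ℕ) (a : Fin k → ℝ) (w : Fin (n + 2) → ℂ) :
    Fin (n + 2) → ℂ :=
  fun j => if h : (j : ℕ) < k then Complex.I * ((a ⟨j, h⟩ : ℂ) + 1) * w j
           else Complex.I * w j

lemma herm_two (n : ℕ) (p q : Fin (n+2)) (hpq : p ≠ q) (c d : ℂ) :
    hermForm n (fun m => if m = p then c else if m = q then d else 0)
      (fun m => if m = p then c else if m = q then d else 0) =
    (if (p : ℕ) = n+1 then (-1:ℂ) else 1) * ((starRingEnd ℂ) c * c)
      + (if (q : ℕ) = n+1 then (-1:ℂ) else 1) * ((starRingEnd ℂ) d * d) := by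
  unfold hermForm
  rw [← Finset.sum_subset (Finset.subset_univ {p, q})]
  · rw [Finset.sum_pair hpq]
    simp [hpq, hpq.symm]
  · intro m _ hm
    simp only [Finset.mem_insert, Finset.mem_singleton, not_or] at hm
    simp [hm.1, hm.2]

lemma aux (n k : ℕ) (hk : k ≤ n + 1) (a : Fin k → ℝ) (i : Fin k) :
    ∃ v : Fin (n + 2) → ℂ, v ≠ 0 ∧ hermForm n v v = 0 ∧
      hermForm n (xiShift n k a v) (xiShift n k a v) = (((a i + 1) ^ 2 - 1 : ℝ) : ℂ) := by
  have hi : (i : ℕ) < n + 2 := by omega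
  set p : Fin (n+2) := ⟨i, hi⟩ with hp
  set q : Fin (n+2) := ⟨n+1, by omega⟩ with hq
  have hpq : p ≠ q := by
    intro h
    have : (i : ℕ) = n + 1 := congrArg Fin.val h
    omega
  refine ⟨fun m => if m = p then 1 else if m = q then 1 else 0, ?_, ?_, ?_⟩
  · intro h
    have := congrFun h p
    simp at this
  · rw [herm_two n p q hpq]
    have h1 : ¬ ((p : ℕ) = n + 1) := by simp [hp]; omega
    have h2 : (q : ℕ) = n + 1 := rfl
    simp [h1, h2]
  · have hxi : xiShift n k a (fun m => if m = p then 1 else if m = q then 1 else 0)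
        = fun m => if m = p then Complex.I * ((a i : ℂ) + 1)
            else if m = q then Complex.I else 0 := by
      funext m
      unfold xiShift
      by_cases hmp : m = p
      · subst hmp
        have hlt : (p : ℕ) < k := i.isLt
        simp [hlt, hpq]
        exact congrArg a (Fin.ext rfl)
      · by_cases hmq : m = q
        · subst hmq
          have hlt : ¬ ((q : ℕ) < k) := by simp [hq]; omega
          simp [hlt, hpq, hmp]
        · simp [hmp, hmq]
    rw [hxi, herm_two n p q hpq]
    have h1 : ¬ ((p : ℕ) = n + 1) := by simp [hp]; omega
    have h2 : (q : ℕ) = n + 1 := rfl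
    simp only [h1, h2, if_true, if_false, map_mul, Complex.conj_I, map_add,
      Complex.conj_ofReal, map_one]
    push_cast
    ring_nf
    simp [Complex.I_sq]

/-- If there are indices `i, j ≤ k` with `(a_i+1)² > 1` and `(a_j+1)² < 1`, then there are
nonzero null vectors `v, v'` with `⟨ξ_v, ξ_v⟩ > 0` and `⟨ξ_{v'}, ξ_{v'}⟩ < 0`: the induced
vector field is neither everywhere causal nor everywhere spacelike on the null cone. -/
theorem xiShift_mixed (n k : ℕ) (hn : 1 ≤ n) (hk1 : 1 ≤ k) (hk : k ≤ n + 1)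
    (a : Fin k → ℝ)
    (hmix : ∃ i j : Fin k, 1 < (a i + 1) ^ 2 ∧ (a j + 1) ^ 2 < 1) :
    ∃ v v' : Fin (n + 2) → ℂ, v ≠ 0 ∧ v' ≠ 0 ∧
      hermForm n v v = 0 ∧ hermForm n v' v' = 0 ∧
      0 < (hermForm n (xiShift n k a v) (xiShift n k a v)).re ∧
      (hermForm n (xiShift n k a v) (xiShift n k a v)).im = 0 ∧
      (hermForm n (xiShift n k a v') (xiShift n k a v')).re < 0 ∧
      (hermForm n (xiShift n k a v') (xiShift n k a v')).im = 0 := by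
  obtain ⟨i, j, hi, hj⟩ := hmix
  obtain ⟨v, hv0, hvnull, hvval⟩ := aux n k hk a i
  obtain ⟨v', hv'0, hv'null, hv'val⟩ := aux n k hk a j
  exact ⟨v, v', hv0, hv'0, hvnull, hv'null,
    by rw [hvval, Complex.ofReal_re]; linarith,
    by rw [hvval, Complex.ofReal_im],
    by rw [hv'val, Complex.ofReal_re]; linarith,
    by rw [hv'val, Complex.ofReal_im]⟩
end
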